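/- An action theory ⟨S, E, X, I⟩ over finitely many actions satisfies the global Postulate PS* if and only if for every action a ∈ Act, the single-action theory ⟨S, E_a, X_a, I_a⟩ satisfies Postulate PS, provided the underlying multimodal logic is a fusion (independently axiomatized, no interaction between modalities). -/
import Mathlib


/-! Classical propositional formulas. -/
inductive PForm (α : Type) : Type
  | atom : α → PForm α
  | fls  : PForm α
  | not  : PForm α → PForm α
  | and  : PForm α → PForm α → PForm α
  | or   : PForm α → PForm α → PForm α
  | imp  : PForm α → PForm α → PForm α

def PForm.Sat {α : Type} (v : α → Prop) : PForm α → Prop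
  | atom p => v p
  | fls => False
  | not φ => ¬ Sat v φ
  | and φ ψ => Sat v φ ∧ Sat v ψ
  | or φ ψ => Sat v φ ∨ Sat v ψ
  | imp φ ψ => Sat v φ → Sat v ψ

/-- Classical (propositional) global consequence. -/
def EntailsCl {α : Type} (Γ : Set (PForm α)) (φ : PForm α) : Prop :=
  ∀ v : α → Prop, (∀ ψ ∈ Γ, PForm.Sat v ψ) → PForm.Sat v φ

/-- Multimodal formulas with one box per action. -/
inductive MForm (Act α : Type) : Type
  | atom : α → MForm Act α
  | fls  : MForm Act α
  | not  : MForm Act α → MForm Act α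
  | and  : MForm Act α → MForm Act α → MForm Act α
  | or   : MForm Act α → MForm Act α → MForm Act α
  | imp  : MForm Act α → MForm Act α → MForm Act α
  | box  : Act → MForm Act α → MForm Act α

def PForm.toM {Act α : Type} : PForm α → MForm Act α
  | .atom p => .atom p
  | .fls => .fls
  | .not φ => .not φ.toM
  | .and φ ψ => .and φ.toM ψ.toM
  | .or φ ψ => .or φ.toM ψ.toM
  | .imp φ ψ => .imp φ.toM ψ.toM

/-- A Kripke model for multimodal K. -/
structure KModel (Act α : Type) where
  W : Type
  R : Act → W → W → Prop
  V : W → α → Prop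

def MForm.Sat {Act α : Type} (M : KModel Act α) : M.W → MForm Act α → Prop
  | w, atom p => M.V w p
  | _, fls => False
  | w, not φ => ¬ Sat M w φ
  | w, and φ ψ => Sat M w φ ∧ Sat M w ψ
  | w, or φ ψ => Sat M w φ ∨ Sat M w ψ
  | w, imp φ ψ => Sat M w φ → Sat M w ψ
  | w, box a φ => ∀ w', M.R a w w' → Sat M w' φ

/-- Global truth in a model. -/
def Glob {Act α : Type} (M : KModel Act α) (Φ : MForm Act α) : Prop :=
  ∀ w : M.W, MForm.Sat M w Φ

/-- Global consequence in multimodal K. -/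
def ConsK {Act α : Type} (Γ : Set (MForm Act α)) (Φ : MForm Act α) : Prop :=
  ∀ M : KModel Act α, (∀ Ψ ∈ Γ, Glob M Ψ) → Glob M Φ

/-- Literals. -/
abbrev Lit (α : Type) := α × Bool

def Lit.Sat {α : Type} (v : α → Prop) (l : Lit α) : Prop :=
  if l.2 then v l.1 else ¬ v l.1

/-- A dependence relation `⇝ ⊆ Act × Lit`. -/
abbrev Dep (Act α : Type) := Act → Lit α → Prop

/-- `⇝`-models: along `R a`, literals independent of `a` persist. -/
def IsDepModel {Act α : Type} (dep : Dep Act α) (M : KModel Act α) : Prop :=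
  ∀ (a : Act) (w w' : M.W), M.R a w w' → ∀ p : α,
    (¬ dep a (p, true) → ¬ M.V w p → ¬ M.V w' p) ∧
    (¬ dep a (p, false) → M.V w p → M.V w' p)

/-- Dependence-based global consequence. -/
def ConsDep {Act α : Type} (dep : Dep Act α) (Γ : Set (MForm Act α)) (Φ : MForm Act α) : Prop :=
  ∀ M : KModel Act α, IsDepModel dep M → (∀ Ψ ∈ Γ, Glob M Ψ) → Glob M Φ

/-- An action theory: static laws `S`, effect laws `E` (antecedent/consequent
pairs), executability laws `X` (antecedents), inexecutability laws `I`
(antecedents). -/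
structure ActionTheory (Act α : Type) where
  S : Set (PForm α)
  E : Act → Set (PForm α × PForm α)
  X : Act → Set (PForm α)
  I : Act → Set (PForm α)

/-- `⟨a⟩Φ`. -/
def MForm.diam {Act α : Type} (a : Act) (Φ : MForm Act α) : MForm Act α :=
  .not (.box a (.not Φ))

/-- Effect law `A → [a]C`. -/
def effLaw {Act α : Type} (a : Act) (e : PForm α × PForm α) : MForm Act α :=
  .imp e.1.toM (.box a e.2.toM)

/-- Executability law `A → ⟨a⟩⊤`. -/
def exeLaw {Act α : Type} (a : Act) (A : PForm α) : MForm Act α :=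
  .imp A.toM (MForm.diam a (.not .fls))

/-- Inexecutability law `A → [a]⊥`. -/
def inexLaw {Act α : Type} (a : Act) (A : PForm α) : MForm Act α :=
  .imp A.toM (.box a .fls)

variable {Act α : Type}

def staticForms (T : ActionTheory Act α) : Set (MForm Act α) := PForm.toM '' T.S
def effForms (T : ActionTheory Act α) (a : Act) : Set (MForm Act α) := effLaw a '' T.E a
def exeForms (T : ActionTheory Act α) (a : Act) : Set (MForm Act α) := exeLaw a '' T.X a
def inexForms (T : ActionTheory Act α) (a : Act) : Set (MForm Act α) := inexLaw a '' T.I a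

/-- The action theory of the single action `a`:  `S ∪ E_a ∪ X_a ∪ I_a`. -/
def formsFor (T : ActionTheory Act α) (a : Act) : Set (MForm Act α) :=
  staticForms T ∪ effForms T a ∪ exeForms T a ∪ inexForms T a

/-- The whole action theory:  `S ∪ E ∪ X ∪ I`. -/
def allForms (T : ActionTheory Act α) : Set (MForm Act α) :=
  staticForms T ∪ (⋃ a, effForms T a) ∪ (⋃ a, exeForms T a) ∪ (⋃ a, inexForms T a)

/-- Postulate PS for action `a`: no implicit static laws. -/
def PS (T : ActionTheory Act α) (dep : Dep Act α) (a : Act) : Prop :=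
  ∀ φ : PForm α, ConsDep dep (formsFor T a) φ.toM → EntailsCl T.S φ

/-- Postulate PS*: no implicit static laws for the whole theory. -/
def PSstar (T : ActionTheory Act α) (dep : Dep Act α) : Prop :=
  ∀ φ : PForm α, ConsDep dep (allForms T) φ.toM → EntailsCl T.S φ

/-- Postulate PI for action `a`: no implicit inexecutability laws. -/
def PIpost (T : ActionTheory Act α) (dep : Dep Act α) (a : Act) : Prop :=
  ∀ A : PForm α, ConsDep dep (formsFor T a) (inexLaw a A) →
    ConsK (staticForms T ∪ inexForms T a) (inexLaw a A)

/-- Postulate PI*: no implicit inexecutability laws for the whole theory. -/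
def PIstar (T : ActionTheory Act α) (dep : Dep Act α) : Prop :=
  ∀ (a : Act) (A : PForm α), ConsDep dep (allForms T) (inexLaw a A) →
    ConsK (staticForms T ∪ ⋃ a', inexForms T a') (inexLaw a A)

/-- Truth lemma: classical formulas only depend on the valuation. -/
lemma pform_truth (M : KModel Act α) (w : M.W) (φ : PForm α) :
    MForm.Sat M w (PForm.toM φ) ↔ PForm.Sat (M.V w) φ := by
  induction φ with
  | atom p => rfl
  | fls => rfl
  | not φ ih => simp [PForm.toM, MForm.Sat, PForm.Sat, ih]
  | and φ ψ ih1 ih2 => simp [PForm.toM, MForm.Sat, PForm.Sat, ih1, ih2]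
  | or φ ψ ih1 ih2 => simp [PForm.toM, MForm.Sat, PForm.Sat, ih1, ih2]
  | imp φ ψ ih1 ih2 => simp [PForm.toM, MForm.Sat, PForm.Sat, ih1, ih2]

open Classical in
noncomputable def litOf (u : α → Prop) (p : α) : PForm α :=
  if u p then PForm.atom p else PForm.not (PForm.atom p)

noncomputable def chiList (u : α → Prop) : List α → PForm α
  | [] => PForm.not PForm.fls
  | p :: l => PForm.and (litOf u p) (chiList u l)

lemma litOf_sat (u v : α → Prop) (p : α) :
    PForm.Sat v (litOf u p) ↔ (v p ↔ u p) := by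
  unfold litOf
  by_cases h : u p <;> simp [h, PForm.Sat]

lemma chiList_sat (u v : α → Prop) (l : List α) :
    PForm.Sat v (chiList u l) ↔ ∀ p ∈ l, (v p ↔ u p) := by
  induction l with
  | nil => simp [chiList, PForm.Sat]
  | cons p l ih =>
    simp only [chiList, PForm.Sat, ih, List.mem_cons, litOf_sat]
    constructor
    · rintro ⟨h1, h2⟩ q hq
      rcases hq with rfl | hq
      · exact h1
      · exact h2 q hq
    · intro h
      exact ⟨h p (Or.inl rfl), fun q hq => h q (Or.inr hq)⟩

noncomputable def chi [Fintype α] (u : α → Prop) : PForm α :=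
  chiList u Finset.univ.toList

lemma chi_sat [Fintype α] (u v : α → Prop) :
    PForm.Sat v (chi u) ↔ ∀ p, (v p ↔ u p) := by
  rw [chi, chiList_sat]
  constructor
  · intro h p; exact h p (by simp)
  · intro h p _; exact h p

lemma formsFor_subset_allForms (T : ActionTheory Act α) (a : Act) :
    formsFor T a ⊆ allForms T := by
  intro Ψ h
  rcases h with ((h | h) | h) | h
  · exact Or.inl (Or.inl (Or.inl h))
  · exact Or.inl (Or.inl (Or.inr (Set.mem_iUnion.2 ⟨a, h⟩)))
  · exact Or.inl (Or.inr (Set.mem_iUnion.2 ⟨a, h⟩))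
  · exact Or.inr (Set.mem_iUnion.2 ⟨a, h⟩)

/-- Key canonical-model existence: if `PS` holds for `a` and `u ⊨ S`, there is
a dep-model of `formsFor T a` with a world whose valuation is exactly `u`. -/
lemma exists_witness_model [Fintype α] (T : ActionTheory Act α) (dep : Dep Act α)
    (a : Act) (hPS : PS T dep a) (u : α → Prop) (hu : ∀ ψ ∈ T.S, PForm.Sat u ψ) :
    ∃ (N : KModel Act α) (w : N.W), IsDepModel dep N ∧
      (∀ Ψ ∈ formsFor T a, Glob N Ψ) ∧ (∀ p, N.V w p ↔ u p) := by
  by_contra hcon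
  push_neg at hcon
  have hcons : ConsDep dep (formsFor T a) (PForm.toM (PForm.not (chi u))) := by
    intro N hN hΓ w
    rw [pform_truth]
    show ¬ PForm.Sat (N.V w) (chi u)
    rw [chi_sat]
    intro hall
    rcases hcon N w hN hΓ with ⟨p, hp⟩
    rcases hp with ⟨h1, h2⟩ | ⟨h1, h2⟩
    · exact h2 ((hall p).1 h1)
    · exact h1 ((hall p).2 h2)
  have := hPS _ hcons u hu
  have hsat : PForm.Sat u (chi u) := (chi_sat u u).2 fun p => Iff.rfl
  exact this hsat

/-- PS* holds iff PS holds for every individual action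
(the logic being a fusion of monomodal K's). -/
theorem stmt_9 [Fintype Act] [Fintype α] (T : ActionTheory Act α) (dep : Dep Act α) :
    PSstar T dep ↔ ∀ a : Act, PS T dep a := by
  constructor
  · -- PS* → PS for each action
    intro h a φ hφ
    apply h
    intro M hM hΓ
    exact hφ M hM fun Ψ hΨ => hΓ Ψ (formsFor_subset_allForms T a hΨ)
  · -- (∀ a, PS a) → PS*
    intro hPS φ hφ v hv
    -- Build the fused model whose worlds are valuations satisfying S.
    let M : KModel Act α :=
      { W := {u : α → Prop // ∀ ψ ∈ T.S, PForm.Sat u ψ}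
        R := fun a u u' => ∃ (N : KModel Act α) (w w' : N.W),
          IsDepModel dep N ∧ (∀ Ψ ∈ formsFor T a, Glob N Ψ) ∧ N.R a w w' ∧
          (∀ p, N.V w p ↔ u.1 p) ∧ (∀ p, N.V w' p ↔ u'.1 p)
        V := fun u p => u.1 p }
    have hMdep : IsDepModel dep M := by
      rintro a u u' ⟨N, w, w', hNdep, _, hr, hw, hw'⟩ p
      constructor
      · intro hnd hnv hv'
        exact (hNdep a w w' hr p).1 hnd (fun h => hnv ((hw p).1 h)) ((hw' p).2 hv')
      · intro hnd hvp
        exact (hw' p).1 ((hNdep a w w' hr p).2 hnd ((hw p).2 hvp))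
    have hGlob : ∀ Ψ ∈ allForms T, Glob M Ψ := by
      rintro Ψ (((hΨ | hΨ) | hΨ) | hΨ)
      · -- static laws
        rcases hΨ with ⟨ψ, hψ, rfl⟩
        intro u
        rw [pform_truth]
        exact u.2 ψ hψ
      · -- effect laws
        rcases Set.mem_iUnion.1 hΨ with ⟨a, e, hE, rfl⟩
        intro u
        show MForm.Sat M u (.imp e.1.toM (.box a e.2.toM))
        intro hA u' hR
        rcases hR with ⟨N, w, w', hNdep, hNsat, hr, hweq, hw'eq⟩
        have hVw : N.V w = u.1 := funext fun p => propext (hweq p)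
        have hVw' : N.V w' = u'.1 := funext fun p => propext (hw'eq p)
        have hEff : MForm.Sat N w (effLaw a e) :=
          hNsat (effLaw a e) (Or.inl (Or.inl (Or.inr ⟨e, hE, rfl⟩))) w
        have hAw : MForm.Sat N w e.1.toM := by
          rw [pform_truth, hVw]
          exact (pform_truth M u e.1).1 hA
        have hC : MForm.Sat N w' e.2.toM := hEff hAw w' hr
        rw [pform_truth, hVw'] at hC
        exact (pform_truth M u' e.2).2 hC
      · -- executability laws
        rcases Set.mem_iUnion.1 hΨ with ⟨a, A, hX, rfl⟩
        intro u
        show MForm.Sat M u (.imp A.toM (MForm.diam a (.not .fls)))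
        intro hA
        rcases exists_witness_model T dep a (hPS a) u.1 u.2 with ⟨N, w, hNdep, hNsat, hweq⟩
        have hVw : N.V w = u.1 := funext fun p => propext (hweq p)
        have hExe : MForm.Sat N w (exeLaw a A) :=
          hNsat (exeLaw a A) (Or.inl (Or.inr ⟨A, hX, rfl⟩)) w
        have hAw : MForm.Sat N w A.toM := by
          rw [pform_truth, hVw]
          exact (pform_truth M u A).1 hA
        have hdiam : MForm.Sat N w (MForm.diam a (.not .fls)) := hExe hAw
        -- extract an a-successor of w in N
        have hsucc : ∃ w', N.R a w w' := by
          by_contra hno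
          push_neg at hno
          exact hdiam (fun w' hr => absurd hr (hno w'))
        rcases hsucc with ⟨w', hr⟩
        have hu' : ∀ ψ ∈ T.S, PForm.Sat (N.V w') ψ := by
          intro ψ hψ
          have := hNsat (PForm.toM ψ) (Or.inl (Or.inl (Or.inl ⟨ψ, hψ, rfl⟩))) w'
          rwa [pform_truth] at this
        refine fun hall => hall ⟨N.V w', hu'⟩ ⟨N, w, w', hNdep, hNsat, hr, hweq, fun p => Iff.rfl⟩ ?_
        exact fun h => h
      · -- inexecutability laws
        rcases Set.mem_iUnion.1 hΨ with ⟨a, A, hI, rfl⟩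
        intro u
        show MForm.Sat M u (.imp A.toM (.box a .fls))
        intro hA u' hR
        rcases hR with ⟨N, w, w', hNdep, hNsat, hr, hweq, hw'eq⟩
        have hVw : N.V w = u.1 := funext fun p => propext (hweq p)
        have hInex : MForm.Sat N w (inexLaw a A) :=
          hNsat (inexLaw a A) (Or.inr ⟨A, hI, rfl⟩) w
        have hAw : MForm.Sat N w A.toM := by
          rw [pform_truth, hVw]
          exact (pform_truth M u A).1 hA
        exact hInex hAw w' hr
    have := hφ M hMdep hGlob ⟨v, hv⟩
    rwa [pform_truth] at this
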